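/- Let (R, m) be a Noetherian local ring and let L : 0 → L_s → ⋯ → L_1 → L_0 → 0 be a complex of R-modules such that for every 1 ≤ i ≤ s: (a) depth_R(L_i) ≥ i, and (b) H_i(L) = 0 or depth_R(H_i(L)) = 0. Then H_i(L) = 0 for every 1 ≤ i ≤ s. -/

import Mathlib

universe u

open CategoryTheory

universe v w

set_option linter.unusedVariables false
open Pointwise

namespace PS

variable {R : Type u} [CommRing R]

section prelim
variable {M : Type v} [AddCommGroup M] [Module R M]

lemma mem_smul_top_iff (r : R) (x : M) :
    x ∈ r • (⊤ : Submodule R M) ↔ ∃ y, r • y = x := by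
  constructor
  · rintro ⟨y, -, rfl⟩; exact ⟨y, rfl⟩
  · rintro ⟨y, rfl⟩; exact Submodule.smul_mem_pointwise_smul y r ⊤ trivial

lemma annihilator_span_singleton_sub {N : Submodule R M} (y : N) :
    (Submodule.span R {y}).annihilator = (Submodule.span R {(y : M)}).annihilator := by
  ext t
  simp only [Submodule.mem_annihilator_span_singleton]
  exact ⟨fun h => congrArg Subtype.val h, fun h => Subtype.ext h⟩

lemma mem_colon_bot_iff {x : M} {t : R} : t ∈ (⊥ : Submodule R M).colon {x} ↔ t • x = 0 := by
  rw [Submodule.mem_colon_singleton, Submodule.mem_bot]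

lemma colon_bot_sub {N : Submodule R M} (y : N) :
    (⊥ : Submodule R N).colon {y} = (⊥ : Submodule R M).colon {(y : M)} := by
  ext t
  simp only [mem_colon_bot_iff]
  exact ⟨fun h => congrArg Subtype.val h, fun h => Subtype.ext h⟩

/-- Associated primes of an extension. -/
lemma ass_subset_of_submodule [IsNoetherianRing R] (N : Submodule R M) :
    associatedPrimes R M ⊆
      associatedPrimes R N ∪ associatedPrimes R (M ⧸ N) := by
  rintro p hp'
  obtain ⟨hp, x, hx⟩ := isAssociatedPrime_iff.mp hp'
  by_cases hc : ∃ r : R, r • x ∈ N ∧ r • x ≠ 0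
  · obtain ⟨r, hrN, hr0⟩ := hc
    left
    refine isAssociatedPrime_iff.mpr ⟨hp, ⟨⟨r • x, hrN⟩, ?_⟩⟩
    rw [colon_bot_sub]
    ext t
    rw [PS.mem_colon_bot_iff]
    constructor
    · intro ht
      have htx : t • x = 0 := by
        have := hx ▸ ht
        rwa [PS.mem_colon_bot_iff] at this
      show t • (r • x) = 0
      rw [smul_comm, htx, smul_zero]
    · intro ht
      have ht' : t • (r • x) = 0 := ht
      have htr : (t * r) • x = 0 := by rwa [mul_smul]
      have : t * r ∈ p := by
        rw [hx, PS.mem_colon_bot_iff]; exact htr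
      rcases hp.mem_or_mem this with h | h
      · exact h
      · exfalso; apply hr0
        have : r • x = 0 := by
          have := hx ▸ h
          rwa [PS.mem_colon_bot_iff] at this
        exact this
  · right
    push_neg at hc
    refine isAssociatedPrime_iff.mpr ⟨hp, ⟨Submodule.Quotient.mk x, ?_⟩⟩
    ext t
    rw [PS.mem_colon_bot_iff, ← Submodule.Quotient.mk_smul,
      Submodule.Quotient.mk_eq_zero]
    constructor
    · intro ht
      have : t • x = 0 := by
        have := hx ▸ ht
        rwa [PS.mem_colon_bot_iff] at this
      rw [this]; exact N.zero_mem
    · intro ht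
      rw [hx, PS.mem_colon_bot_iff]
      exact hc t ht

end prelim

section assfin

variable [IsNoetherianRing R]
variable {M : Type v} [AddCommGroup M] [Module R M]

lemma assFinite (M : Type v) [AddCommGroup M] [Module R M] [Module.Finite R M] :
    (associatedPrimes R M).Finite := by
  haveI : IsNoetherian R M := isNoetherian_of_isNoetherianRing_of_finite R M
  -- consider the set of submodules N with Ass(N) finite; it has a maximal element
  have hmax := (set_has_maximal_iff_noetherian.mpr ‹IsNoetherian R M›)
    {N : Submodule R M | (associatedPrimes R ↥N).Finite}
    ⟨⊥, by
      have : Subsingleton ↥(⊥ : Submodule R M) := by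
        constructor; rintro ⟨a, ha⟩ ⟨b, hb⟩
        simp only [Submodule.mem_bot] at ha hb
        simp [ha, hb]
      rw [Set.mem_setOf_eq, associatedPrimes.eq_empty_of_subsingleton]
      exact Set.finite_empty⟩
  obtain ⟨N, hNfin, hNmax⟩ := hmax
  -- claim N = ⊤
  by_cases hN : N = ⊤
  · subst hN
    have := LinearEquiv.AssociatedPrimes.eq (Submodule.topEquiv (R := R) (M := M))
    rw [← this]
    exact hNfin
  · exfalso
    haveI : Nontrivial (M ⧸ N) := Submodule.Quotient.nontrivial_iff.mpr hN
    obtain ⟨p, hp⟩ := associatedPrimes.nonempty R (M ⧸ N)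
    obtain ⟨hprime, y, hy⟩ := isAssociatedPrime_iff.mp hp
    obtain ⟨x, rfl⟩ := Submodule.Quotient.mk_surjective N y
    -- N' := N ⊔ R x
    set N' : Submodule R M := N ⊔ Submodule.span R {x} with hN'
    have hle : N ≤ N' := le_sup_left
    have hxN' : x ∈ N' := Submodule.mem_sup_right (Submodule.mem_span_singleton_self x)
    -- quotient N'/N ≅ R/p
    set φ : R →ₗ[R] ↥N' ⧸ (N.comap N'.subtype) :=
      (N.comap N'.subtype).mkQ ∘ₗ (LinearMap.toSpanSingleton R ↥N' ⟨x, hxN'⟩) with hφ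
    have hφ_surj : Function.Surjective φ := by
      intro z
      obtain ⟨⟨w, hw⟩, rfl⟩ := Submodule.Quotient.mk_surjective _ z
      rw [hN'] at hw
      obtain ⟨n, hn, t, ht, rfl⟩ := Submodule.mem_sup.mp hw
      obtain ⟨r, rfl⟩ := Submodule.mem_span_singleton.mp ht
      refine ⟨r, ?_⟩
      rw [hφ]
      simp only [LinearMap.coe_comp, Function.comp_apply, LinearMap.toSpanSingleton_apply,
        Submodule.mkQ_apply]
      rw [← sub_eq_zero, ← Submodule.Quotient.mk_sub, Submodule.Quotient.mk_eq_zero,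
        Submodule.mem_comap]
      simpa using hn
    have hker : LinearMap.ker φ = p := by
      ext t
      rw [hy, PS.mem_colon_bot_iff, LinearMap.mem_ker, hφ]
      simp only [LinearMap.coe_comp, Function.comp_apply, LinearMap.toSpanSingleton_apply,
        Submodule.mkQ_apply]
      rw [Submodule.Quotient.mk_eq_zero, Submodule.mem_comap]
      rw [← Submodule.Quotient.mk_smul, Submodule.Quotient.mk_eq_zero]
      exact ⟨fun h => by simpa using h, fun h => by simpa using h⟩
    have e : (R ⧸ p) ≃ₗ[R] (↥N' ⧸ (N.comap N'.subtype)) :=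
      (Submodule.quotEquivOfEq _ _ hker.symm) ≪≫ₗ φ.quotKerEquivOfSurjective hφ_surj
    have hassq : associatedPrimes R (↥N' ⧸ (N.comap N'.subtype)) = {p} := by
      rw [← LinearEquiv.AssociatedPrimes.eq e]
      rw [associatedPrimes.eq_singleton_of_isPrimary hprime.isPrimary, hprime.radical]
    have hassN : (associatedPrimes R ↥(N.comap N'.subtype)).Finite := by
      have e2 := Submodule.comapSubtypeEquivOfLe hle
      rw [LinearEquiv.AssociatedPrimes.eq e2]
      exact hNfin
    have hfinN' : (associatedPrimes R ↥N').Finite := by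
      have hsub := ass_subset_of_submodule (M := ↥N') (Submodule.comap N'.subtype N)
      refine Set.Finite.subset ?_ hsub
      refine Set.Finite.union hassN ?_
      rw [hassq]; exact Set.finite_singleton p
    have hlt : N < N' := by
      rw [lt_iff_le_and_ne]
      refine ⟨hle, fun h => ?_⟩
      have : Submodule.Quotient.mk (p := N) x ≠ 0 := by
        intro h0
        have hbot : p = (⊥ : Submodule R (M ⧸ N)).annihilator := by
          rw [hy, h0, Submodule.colon_singleton_zero, Submodule.annihilator_bot]
        rw [Submodule.annihilator_bot] at hbot
        exact hprime.ne_top hbot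
      apply this
      rw [Submodule.Quotient.mk_eq_zero]
      rw [h]; exact hxN'
    exact hNmax N' hfinN' hlt

end assfin

section reg

open IsLocalRing

variable {R : Type u} [CommRing R] [IsNoetherianRing R] [IsLocalRing R]

/-- A nonzero element killed by the whole maximal ideal. -/
def HasSocle (M : Type v) [AddCommGroup M] [Module R M] : Prop :=
  ∃ x : M, x ≠ 0 ∧ ∀ t ∈ maximalIdeal R, t • x = 0

lemma exists_smulRegular_of_not_hasSocle (M : Type v) [AddCommGroup M] [Module R M]
    [Module.Finite R M] (h : ¬ HasSocle (R := R) M) :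
    ∃ r ∈ maximalIdeal R, IsSMulRegular M r := by
  by_cases hM : Subsingleton M
  · exact ⟨0, Ideal.zero_mem _, fun a b _ => Subsingleton.elim a b⟩
  · have : Nontrivial M := not_subsingleton_iff_nontrivial.mp hM
    by_contra hcon
    push_neg at hcon
    have hzd : ∀ r ∈ maximalIdeal R, ∃ p ∈ associatedPrimes R M, r ∈ p := by
      intro r hr
      have hex : ∃ x : M, x ≠ 0 ∧ r • x = 0 := by
        by_contra h2; push_neg at h2
        refine hcon r hr (fun a b hab => ?_)
        have : r • (a - b) = 0 := by
          rw [smul_sub, sub_eq_zero]; exact hab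
        have := h2 (a - b)
        by_cases hab0 : a - b = 0
        · exact sub_eq_zero.mp hab0
        · exact absurd this (by simp [hab0, ‹r • (a-b) = 0›])
      obtain ⟨x, hx0, hrx⟩ := hex
      obtain ⟨p, hp, hle⟩ := exists_le_isAssociatedPrime_of_isNoetherianRing R x hx0
      exact ⟨p, hp, hle (by rwa [PS.mem_colon_bot_iff])⟩
    have hfin := PS.assFinite (R := R) M
    obtain ⟨p₀, hp₀⟩ := associatedPrimes.nonempty R M
    have havoid := (Ideal.subset_union_prime (R := R) (ι := Ideal R)
      (s := hfin.toFinset) (f := id) (I := maximalIdeal R) p₀ p₀ ?_).mp ?_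
    · obtain ⟨p, hpS, hmp⟩ := havoid
      rw [Set.Finite.mem_toFinset] at hpS
      obtain ⟨hprime, x, hx⟩ := isAssociatedPrime_iff.mp hpS
      have hpm : p ≤ maximalIdeal R := le_maximalIdeal hprime.ne_top
      have hpm' : p = maximalIdeal R := le_antisymm hpm hmp
      apply h
      refine ⟨x, ?_, ?_⟩
      · intro h0
        apply hprime.ne_top
        rw [hx, h0]
        have : Submodule.span R ({0} : Set M) = ⊥ := Submodule.span_zero_singleton R
        rw [Submodule.colon_singleton_zero]
      · intro t ht
        have : t ∈ p := hpm' ▸ ht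
        rw [hx] at this
        rwa [PS.mem_colon_bot_iff] at this
    · intro i hi _ _
      rw [Set.Finite.mem_toFinset] at hi
      exact hi.isPrime
    · intro r hr
      obtain ⟨p, hp, hrp⟩ := hzd r hr
      exact Set.mem_biUnion (by rwa [Set.Finite.coe_toFinset]) hrp

end reg
set_option linter.unusedSectionVars false
section depth

open IsLocalRing RingTheory.Sequence Pointwise

variable {R : Type u} [CommRing R] [IsLocalRing R]

/-- "depth ≥ n" witnessed by a weakly regular sequence in the maximal ideal. -/
def DepthGE (M : Type v) [AddCommGroup M] [Module R M] (n : ℕ) : Prop :=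
  ∃ rs : List R, rs.length = n ∧ (∀ r ∈ rs, r ∈ maximalIdeal R) ∧
    RingTheory.Sequence.IsWeaklyRegular M rs

variable {M : Type v} [AddCommGroup M] [Module R M]

lemma isWeaklyRegular_of_subsingleton [Subsingleton M] (rs : List R) :
    IsWeaklyRegular M rs := by
  constructor
  intro i hi
  have : Subsingleton (M ⧸ (Ideal.ofList (rs.take i) • ⊤ : Submodule R M)) :=
    Function.Surjective.subsingleton (Submodule.Quotient.mk_surjective _)
  exact fun x y _ => Subsingleton.elim x y

lemma DepthGE.of_subsingleton [Subsingleton M] (n : ℕ) : DepthGE (R := R) M n :=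
  ⟨List.replicate n 0, List.length_replicate,
    fun r hr => by rw [List.eq_of_mem_replicate hr]; exact Ideal.zero_mem _,
    isWeaklyRegular_of_subsingleton _⟩

lemma isWeaklyRegular_take {rs : List R} (h : IsWeaklyRegular M rs) (k : ℕ) :
    IsWeaklyRegular M (rs.take k) := by
  constructor
  intro i hi
  have hik : i < k := by simp at hi; omega
  have hlen : i < rs.length := by simp at hi; omega
  have h1 : (rs.take k).take i = rs.take i := by
    rw [List.take_take]; congr 1; omega
  have h2 : (rs.take k)[i] = rs[i] := List.getElem_take
  rw [h1, h2]
  exact h.regular_mod_prev i hlen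

lemma DepthGE.mono {n k : ℕ} (h : DepthGE (R := R) M n) (hk : k ≤ n) :
    DepthGE (R := R) M k := by
  obtain ⟨rs, hlen, hmem, hreg⟩ := h
  exact ⟨rs.take k, by rw [List.length_take]; omega,
    fun r hr => hmem r (List.take_subset _ _ hr), isWeaklyRegular_take hreg k⟩

lemma DepthGE.congr {N : Type w} [AddCommGroup N] [Module R N] (e : M ≃ₗ[R] N)
    {n : ℕ} (h : DepthGE (R := R) M n) : DepthGE (R := R) N n := by
  obtain ⟨rs, hlen, hmem, hreg⟩ := h
  exact ⟨rs, hlen, hmem, (LinearEquiv.isWeaklyRegular_congr e rs).mp hreg⟩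

lemma isSMulRegular_submodule (N : Submodule R M) {r : R} (h : IsSMulRegular M r) :
    IsSMulRegular N r :=
  fun a b hab => Subtype.ext (h (congrArg Subtype.val hab))

lemma isSMulRegular_quotient_iff (N : Submodule R M) (c : R) :
    IsSMulRegular (M ⧸ N) c ↔ ∀ x : M, c • x ∈ N → x ∈ N := by
  constructor
  · intro h x hx
    have h0 : c • (Submodule.Quotient.mk (p := N) x) = c • (0 : M ⧸ N) := by
      rw [smul_zero, ← Submodule.Quotient.mk_smul, Submodule.Quotient.mk_eq_zero]
      exact hx
    have := h h0
    rwa [← Submodule.Quotient.mk_eq_zero (p := N)]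
  · intro h a b hab
    obtain ⟨x, rfl⟩ := Submodule.Quotient.mk_surjective N a
    obtain ⟨y, rfl⟩ := Submodule.Quotient.mk_surjective N b
    have hab' : Submodule.Quotient.mk (p := N) (c • x) = Submodule.Quotient.mk (c • y) := hab
    rw [Submodule.Quotient.eq] at hab' ⊢
    exact h _ (by rwa [smul_sub])

lemma hasSocle_quotient_iff (N : Submodule R M) :
    HasSocle (R := R) (M ⧸ N) ↔ ∃ u, u ∉ N ∧ ∀ t ∈ maximalIdeal R, t • u ∈ N := by
  constructor
  · rintro ⟨x, hx0, hx⟩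
    obtain ⟨u, rfl⟩ := Submodule.Quotient.mk_surjective N x
    refine ⟨u, fun hu => hx0 (by rwa [Submodule.Quotient.mk_eq_zero]), fun t ht => ?_⟩
    have := hx t ht
    rwa [← Submodule.Quotient.mk_smul, Submodule.Quotient.mk_eq_zero] at this
  · rintro ⟨u, hu, h⟩
    refine ⟨Submodule.Quotient.mk u, fun h0 => hu (by rwa [Submodule.Quotient.mk_eq_zero] at h0),
      fun t ht => ?_⟩
    rw [← Submodule.Quotient.mk_smul, Submodule.Quotient.mk_eq_zero]
    exact h t ht

/-- Kaplansky's transfer lemma: if `M/aM` has a socle element then so does `M/bM`,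
for `a`, `b` regular on `M` with `b` in the maximal ideal. -/
lemma hasSocle_transfer {a b : R} (ha : IsSMulRegular M a) (hb : IsSMulRegular M b)
    (hbm : b ∈ maximalIdeal R)
    (h : HasSocle (R := R) (QuotSMulTop a M)) : HasSocle (R := R) (QuotSMulTop b M) := by
  rw [hasSocle_quotient_iff] at h ⊢
  obtain ⟨u, hu, hmu⟩ := h
  obtain ⟨v, hv⟩ := (PS.mem_smul_top_iff a (b • u)).mp (hmu b hbm)
  refine ⟨v, ?_, ?_⟩
  · intro hvb
    obtain ⟨w, hw⟩ := (PS.mem_smul_top_iff b v).mp hvb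
    apply hu
    rw [PS.mem_smul_top_iff]
    refine ⟨w, hb ?_⟩
    show b • (a • w) = b • u
    rw [smul_comm, hw, hv]
  · intro t ht
    obtain ⟨wt, hwt⟩ := (PS.mem_smul_top_iff a (t • u)).mp (hmu t ht)
    rw [PS.mem_smul_top_iff]
    refine ⟨wt, ha ?_⟩
    show a • (b • wt) = a • (t • v)
    rw [smul_comm a b, hwt, smul_comm a t, hv, smul_comm b t]

lemma not_hasSocle_of_depthGE_one (h : DepthGE (R := R) M 1) : ¬ HasSocle (R := R) M := by
  obtain ⟨rs, hlen, hmem, hreg⟩ := h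
  match rs, hlen with
  | [r], _ =>
    have hr := (isWeaklyRegular_singleton_iff M r).mp hreg
    rintro ⟨x, hx0, hx⟩
    exact hx0 (hr (show r • x = r • 0 by rw [hx r (hmem r (by simp)), smul_zero]))

lemma not_hasSocle_prod {A : Type v} {B : Type w} [AddCommGroup A] [Module R A]
    [AddCommGroup B] [Module R B] (hA : ¬ HasSocle (R := R) A) (hB : ¬ HasSocle (R := R) B) :
    ¬ HasSocle (R := R) (A × B) := by
  rintro ⟨⟨x, y⟩, hxy0, hxy⟩
  by_cases hx : x = 0
  · apply hB
    refine ⟨y, fun hy => hxy0 (by simp [hx, hy]), fun t ht => ?_⟩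
    have := hxy t ht
    rw [Prod.smul_mk, Prod.mk_eq_zero] at this
    exact this.2
  · apply hA
    refine ⟨x, hx, fun t ht => ?_⟩
    have := hxy t ht
    rw [Prod.smul_mk, Prod.mk_eq_zero] at this
    exact this.1

lemma isSMulRegular_of_prod_left {A : Type v} {B : Type w} [AddCommGroup A] [Module R A]
    [AddCommGroup B] [Module R B] {r : R} (h : IsSMulRegular (A × B) r) :
    IsSMulRegular A r := fun x y hxy =>
  congrArg Prod.fst (h (a₁ := (x, 0)) (a₂ := (y, 0)) (by simpa [Prod.smul_mk] using hxy))

lemma isSMulRegular_of_prod_right {A : Type v} {B : Type w} [AddCommGroup A] [Module R A]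
    [AddCommGroup B] [Module R B] {r : R} (h : IsSMulRegular (A × B) r) :
    IsSMulRegular B r := fun x y hxy =>
  congrArg Prod.snd (h (a₁ := ((0 : A), x)) (a₂ := (0, y)) (by simpa [Prod.smul_mk] using hxy))

end depth
section flex

open IsLocalRing RingTheory.Sequence Pointwise Submodule

variable {R : Type u} [CommRing R] [IsLocalRing R]

lemma reg_transpose {M : Type v} [AddCommGroup M] [Module R M] {b c : R}
    (hb : IsSMulRegular M b) (hc : IsSMulRegular (QuotSMulTop b M) c) :
    IsSMulRegular (QuotSMulTop c M) b := by
  rw [isSMulRegular_quotient_iff] at hc ⊢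
  intro z hz
  obtain ⟨w, hw⟩ := (PS.mem_smul_top_iff c (b • z)).mp hz
  have hwb : c • w ∈ b • (⊤ : Submodule R M) := by
    rw [PS.mem_smul_top_iff]; exact ⟨z, hw.symm⟩
  obtain ⟨w', hw'⟩ := (PS.mem_smul_top_iff b w).mp (hc w hwb)
  rw [PS.mem_smul_top_iff]
  refine ⟨w', hb ?_⟩
  show b • (c • w') = b • z
  rw [smul_comm, hw', hw]

/-- `(M/cM)/b ≃ (M/bM)/c`. -/
noncomputable def quotSMulTopComm (M : Type v) [AddCommGroup M] [Module R M] (b c : R) :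
    QuotSMulTop b (QuotSMulTop c M) ≃ₗ[R] QuotSMulTop c (QuotSMulTop b M) := by
  have aux : ∀ (d e : R), (QuotSMulTop d M ⧸
      (Ideal.ofList [e] • ⊤ : Submodule R (QuotSMulTop d M))) ≃ₗ[R]
      QuotSMulTop e (QuotSMulTop d M) := fun d e =>
    Submodule.quotEquivOfEq _ _ (by rw [Ideal.ofList_singleton, Submodule.ideal_span_singleton_smul])
  have expand : ∀ u v : R, Ideal.ofList [u, v] = Ideal.span {u} ⊔ Ideal.span {v} := by
    intro u v
    rw [Ideal.ofList_cons, Ideal.ofList_cons, Ideal.ofList_nil, sup_bot_eq]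
  have hperm : Ideal.ofList [c, b] = Ideal.ofList [b, c] := by
    rw [expand, expand, sup_comm]
  exact ((aux c b).symm ≪≫ₗ
    (Submodule.quotOfListConsSMulTopEquivQuotSMulTopInner M c [b]).symm) ≪≫ₗ
    (Submodule.quotEquivOfEq _ _ (by rw [hperm])) ≪≫ₗ
    (Submodule.quotOfListConsSMulTopEquivQuotSMulTopInner M b [c]) ≪≫ₗ (aux b c)

variable [IsNoetherianRing R]

lemma depthGE_quotSMulTop :
    ∀ (n : ℕ) (M : Type v) [AddCommGroup M] [Module R M] [Module.Finite R M],
      DepthGE (R := R) M (n+1) → ∀ {b : R}, b ∈ maximalIdeal R → IsSMulRegular M b →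
      DepthGE (R := R) (QuotSMulTop b M) n := by
  intro n
  induction n with
  | zero =>
    intro M _ _ _ _ b _ _
    exact ⟨[], rfl, by simp, IsWeaklyRegular.nil R _⟩
  | succ n ih =>
    intro M _ _ _ hd b hbm hb
    by_cases hMs : Subsingleton M
    · haveI := hMs
      haveI : Subsingleton (QuotSMulTop b M) :=
        Function.Surjective.subsingleton (Submodule.Quotient.mk_surjective _)
      exact DepthGE.of_subsingleton _
    obtain ⟨rs, hlen, hmem, hreg⟩ := hd
    match rs, hlen, hmem, hreg with
    | x :: y :: rest', hlen, hmem, hreg =>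
      haveI : IsNoetherian R M := isNoetherian_of_isNoetherianRing_of_finite R M
      have hxm : x ∈ maximalIdeal R := hmem x (by simp)
      have hym : y ∈ maximalIdeal R := hmem y (by simp)
      rw [isWeaklyRegular_cons_iff] at hreg
      obtain ⟨hx, hrest⟩ := hreg
      have hy : IsSMulRegular (QuotSMulTop x M) y :=
        ((isWeaklyRegular_cons_iff _ y rest').mp hrest).1
      have hnsx : ¬ HasSocle (R := R) (QuotSMulTop x M) := by
        rw [hasSocle_quotient_iff]
        rintro ⟨u, hu, hmu⟩
        exact hu ((isSMulRegular_quotient_iff _ y).mp hy u (hmu y hym))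
      have hnsb : ¬ HasSocle (R := R) (QuotSMulTop b M) := fun hsoc =>
        hnsx (hasSocle_transfer hb hx hxm hsoc)
      haveI : Module.Finite R (QuotSMulTop b M) := Module.Finite.quotient R _
      haveI : Module.Finite R (QuotSMulTop x M) := Module.Finite.quotient R _
      obtain ⟨c, hcm, hcreg⟩ := exists_smulRegular_of_not_hasSocle
        ((QuotSMulTop b M) × (QuotSMulTop x M)) (not_hasSocle_prod hnsb hnsx)
      have hcb : IsSMulRegular (QuotSMulTop b M) c := isSMulRegular_of_prod_left hcreg
      have hcx : IsSMulRegular (QuotSMulTop x M) c := isSMulRegular_of_prod_right hcreg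
      have hdx : DepthGE (R := R) (QuotSMulTop x M) (n+1) :=
        ⟨y :: rest', by simpa using hlen, fun r hr => hmem r (List.mem_cons_of_mem x hr), hrest⟩
      obtain ⟨zs, hzlen, hzmem, hzreg⟩ := ih (QuotSMulTop x M) hdx hcm hcx
      have hwregM : IsWeaklyRegular M (x :: c :: zs) :=
        IsWeaklyRegular.cons hx (IsWeaklyRegular.cons hcx hzreg)
      have hmem' : ∀ r ∈ (x :: c :: zs), r ∈ maximalIdeal R := by
        intro r hr
        rcases List.mem_cons.mp hr with h | hr
        · subst h; exact hxm
        rcases List.mem_cons.mp hr with h | hr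
        · subst h; exact hcm
        · exact hzmem r hr
      have hperm : IsWeaklyRegular M (c :: x :: zs) :=
        IsLocalRing.isWeaklyRegular_of_perm_of_subset_maximalIdeal hwregM
          (List.Perm.swap c x zs) hmem'
      rw [isWeaklyRegular_cons_iff] at hperm
      obtain ⟨hcM, hrest2⟩ := hperm
      have hbQc : IsSMulRegular (QuotSMulTop c M) b := reg_transpose hb hcb
      haveI : Module.Finite R (QuotSMulTop c M) := Module.Finite.quotient R _
      have hdc : DepthGE (R := R) (QuotSMulTop c M) (n+1) :=
        ⟨x :: zs, by simp [hzlen], by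
          intro r hr
          rcases List.mem_cons.mp hr with h | hr
          · subst h; exact hxm
          · exact hzmem r hr, hrest2⟩
      have hfin : DepthGE (R := R) (QuotSMulTop b (QuotSMulTop c M)) n :=
        ih (QuotSMulTop c M) hdc hbm hbQc
      have hfin2 : DepthGE (R := R) (QuotSMulTop c (QuotSMulTop b M)) n :=
        hfin.congr (quotSMulTopComm M b c)
      obtain ⟨ws, hwlen, hwmem, hwreg⟩ := hfin2
      exact ⟨c :: ws, by simp [hwlen], by
        intro r hr
        rcases List.mem_cons.mp hr with h | hr
        · subst h; exact hcm
        · exact hwmem r hr, IsWeaklyRegular.cons hcb hwreg⟩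

end flex
section dl

open IsLocalRing RingTheory.Sequence Pointwise

variable {R : Type u} [CommRing R] [IsLocalRing R] [IsNoetherianRing R]

lemma no_socle {A B C : Type v} [AddCommGroup A] [Module R A] [AddCommGroup B] [Module R B]
    [AddCommGroup C] [Module R C] [Module.Finite R A] [Module.Finite R B]
    (f : A →ₗ[R] B) (π : B →ₗ[R] C) (hf : Function.Injective f) (hπ : Function.Surjective π)
    (hex : Function.Exact f π) (hA : DepthGE (R := R) A 2) (hB : DepthGE (R := R) B 1) :
    ¬ HasSocle (R := R) C := by
  rintro ⟨x, hx0, hmx⟩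
  obtain ⟨r, hrm, hrreg⟩ := exists_smulRegular_of_not_hasSocle (A × B)
    (not_hasSocle_prod (not_hasSocle_of_depthGE_one (hA.mono one_le_two))
      (not_hasSocle_of_depthGE_one hB))
  have hrA := isSMulRegular_of_prod_left hrreg
  have hrB := isSMulRegular_of_prod_right hrreg
  obtain ⟨r2, hr2m, hr2⟩ : ∃ r2 ∈ maximalIdeal R, IsSMulRegular (QuotSMulTop r A) r2 := by
    have hq := depthGE_quotSMulTop 1 A hA hrm hrA
    obtain ⟨rs, hlen, hmem, hreg⟩ := hq
    match rs, hlen, hmem, hreg with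
    | [r2], _, hmem, hreg =>
      exact ⟨r2, hmem r2 (by simp), (isWeaklyRegular_singleton_iff _ r2).mp hreg⟩
  obtain ⟨b, rfl⟩ := hπ x
  have hmb : ∀ t ∈ maximalIdeal R, ∃ a, f a = t • b := by
    intro t ht
    have h0 : π (t • b) = 0 := by rw [map_smul, hmx t ht]
    exact (hex (t • b)).mp h0
  obtain ⟨a₀, ha₀⟩ := hmb r hrm
  obtain ⟨a₁, ha₁⟩ := hmb r2 hr2m
  have key : r2 • a₀ = r • a₁ := hf (by rw [map_smul, map_smul, ha₀, ha₁, smul_comm])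
  have hmk : (Submodule.Quotient.mk (p := r • (⊤ : Submodule R A)) a₀ : QuotSMulTop r A) = 0 := by
    have h0 : r2 • (Submodule.Quotient.mk (p := r • (⊤ : Submodule R A)) a₀) =
        r2 • (0 : QuotSMulTop r A) := by
      rw [smul_zero, ← Submodule.Quotient.mk_smul, Submodule.Quotient.mk_eq_zero, key]
      exact Submodule.smul_mem_pointwise_smul a₁ r ⊤ trivial
    exact hr2 h0
  rw [Submodule.Quotient.mk_eq_zero] at hmk
  obtain ⟨a₂, ha₂⟩ := (PS.mem_smul_top_iff r a₀).mp hmk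
  have hfa : f a₂ = b := hrB (show r • f a₂ = r • b by rw [← map_smul, ha₂, ha₀])
  apply hx0
  rw [← hfa]
  exact (hex (f a₂)).mpr ⟨a₂, rfl⟩

lemma depth_lemma :
    ∀ (n : ℕ) (A B C : Type v) [AddCommGroup A] [Module R A] [AddCommGroup B] [Module R B]
      [AddCommGroup C] [Module R C] [Module.Finite R A] [Module.Finite R B] [Module.Finite R C]
      (f : A →ₗ[R] B) (π : B →ₗ[R] C),
      Function.Injective f → Function.Surjective π → Function.Exact f π →
      DepthGE (R := R) A (n+1) → DepthGE (R := R) B n → DepthGE (R := R) C n := by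
  intro n
  induction n with
  | zero =>
    intro A B C _ _ _ _ _ _ _ _ _ f π _ _ _ _ _
    exact ⟨[], rfl, by simp, IsWeaklyRegular.nil R _⟩
  | succ n ih =>
    intro A B C _ _ _ _ _ _ _ _ _ f π hf hπ hex hA hB
    have hnsC : ¬ HasSocle (R := R) C :=
      no_socle f π hf hπ hex (hA.mono (by omega)) (hB.mono (by omega))
    have hnsA := not_hasSocle_of_depthGE_one (hA.mono (by omega))
    have hnsB := not_hasSocle_of_depthGE_one (hB.mono (by omega))
    obtain ⟨r, hrm, hrreg⟩ := exists_smulRegular_of_not_hasSocle ((A × B) × C)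
      (not_hasSocle_prod (not_hasSocle_prod hnsA hnsB) hnsC)
    have hrA := isSMulRegular_of_prod_left (isSMulRegular_of_prod_left hrreg)
    have hrB := isSMulRegular_of_prod_right (isSMulRegular_of_prod_left hrreg)
    have hrC := isSMulRegular_of_prod_right hrreg
    have hπ' : Function.Surjective (QuotSMulTop.map r π) := QuotSMulTop.map_surjective r hπ
    have hex' : Function.Exact (QuotSMulTop.map r f) (QuotSMulTop.map r π) :=
      QuotSMulTop.map_exact r hex hπ
    have hf' : Function.Injective (QuotSMulTop.map r f) := by
      rw [injective_iff_map_eq_zero]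
      intro z hz
      obtain ⟨a, rfl⟩ := Submodule.Quotient.mk_surjective _ z
      rw [QuotSMulTop.map_apply_mk, Submodule.Quotient.mk_eq_zero] at hz
      obtain ⟨b₀, hb₀⟩ := (PS.mem_smul_top_iff r (f a)).mp hz
      have hπb₀ : π b₀ = 0 := by
        apply hrC
        show r • π b₀ = r • 0
        rw [smul_zero, ← map_smul, hb₀]
        exact (hex (f a)).mpr ⟨a, rfl⟩
      obtain ⟨a', ha'⟩ := (hex b₀).mp hπb₀
      have haa : a = r • a' := hf (by rw [map_smul, ha', hb₀])
      rw [Submodule.Quotient.mk_eq_zero, haa]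
      exact Submodule.smul_mem_pointwise_smul a' r ⊤ trivial
    haveI : Module.Finite R (QuotSMulTop r A) := Module.Finite.quotient R _
    haveI : Module.Finite R (QuotSMulTop r B) := Module.Finite.quotient R _
    haveI : Module.Finite R (QuotSMulTop r C) := Module.Finite.quotient R _
    have hA' : DepthGE (R := R) (QuotSMulTop r A) (n+1) :=
      depthGE_quotSMulTop (n+1) A hA hrm hrA
    have hB' : DepthGE (R := R) (QuotSMulTop r B) n :=
      depthGE_quotSMulTop n B hB hrm hrB
    obtain ⟨ws, hwlen, hwmem, hwreg⟩ :=
      ih (QuotSMulTop r A) (QuotSMulTop r B) (QuotSMulTop r C)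
        (QuotSMulTop.map r f) (QuotSMulTop.map r π) hf' hπ' hex' hA' hB'
    refine ⟨r :: ws, by simp [hwlen], ?_, IsWeaklyRegular.cons hrC hwreg⟩
    intro t ht
    rcases List.mem_cons.mp ht with h | h
    · subst h; exact hrm
    · exact hwmem t h

end dl
section main

open IsLocalRing RingTheory.Sequence Pointwise CategoryTheory

variable {R : Type u} [CommRing R]

lemma subsingleton_of_isZero {X : ModuleCat.{v} R} (h : Limits.IsZero X) :
    Subsingleton X := by
  constructor
  intro a b
  have h1 : (𝟙 X) = (0 : X ⟶ X) := h.eq_of_src _ _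
  have ha : a = (𝟙 X) a := rfl
  have hb : b = (𝟙 X) b := rfl
  rw [ha, hb, h1]
  rfl

end main

end PS


set_option maxHeartbeats 1000000 in
/-- Acyclicity Lemma (Peskine–Szpiro).  Let `(R, m)` be Noetherian local and
`L : 0 → L_s → ⋯ → L_0 → 0` a complex of finitely generated modules such that for all
`1 ≤ i ≤ s`: (a) `depth L_i ≥ i` (there is a weakly regular sequence of length `i` in `m`
on `L_i`), and (b) `H_i(L) = 0` or `depth H_i(L) = 0` (every element of `m` is a
zerodivisor on `H_i(L)`).  Then `H_i(L) = 0` for all `1 ≤ i ≤ s`. -/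
theorem acyclicity_lemma
    {R : Type u} [CommRing R] [IsNoetherianRing R] [IsLocalRing R]
    (s : ℕ) (L : ChainComplex (ModuleCat.{u} R) ℕ)
    (hb : ∀ i, s < i → Limits.IsZero (L.X i))
    (hfg : ∀ i, Module.Finite R ↥(L.X i))
    (ha : ∀ i, 1 ≤ i → i ≤ s →
      ∃ rs : List R, rs.length = i ∧ (∀ r ∈ rs, r ∈ IsLocalRing.maximalIdeal R) ∧
        RingTheory.Sequence.IsWeaklyRegular ↥(L.X i) rs)
    (hdepth0 : ∀ i, 1 ≤ i → i ≤ s →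
      Subsingleton ↥(L.homology i) ∨
        ∀ r ∈ IsLocalRing.maximalIdeal R,
          ∃ x : ↥(L.homology i), x ≠ 0 ∧ r • x = 0) :
    ∀ i, 1 ≤ i → i ≤ s → Subsingleton ↥(L.homology i) := by
  classical
  haveI : ∀ k, Module.Finite R ↥(L.X k) := hfg
  haveI : ∀ k, IsNoetherian R ↥(L.X k) := fun k =>
    isNoetherian_of_isNoetherianRing_of_finite R ↥(L.X k)
  -- depth hypothesis in `DepthGE` form
  have hdepth : ∀ i, 1 ≤ i → i ≤ s → PS.DepthGE (R := R) ↥(L.X i) i := fun i h1 h2 =>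
    ha i h1 h2
  -- the equivalence between exactness and subsingleton homology
  have hprev : ∀ j : ℕ, (ComplexShape.down ℕ).prev (j+1) = j+2 := fun j =>
    ChainComplex.prev ℕ (j+1)
  have hnext : ∀ j : ℕ, (ComplexShape.down ℕ).next (j+1) = j := fun j =>
    ChainComplex.next_nat_succ j
  have hEP : ∀ j : ℕ,
      ((LinearMap.range (L.d (j+2) (j+1)).hom = LinearMap.ker (L.d (j+1) j).hom) ↔
        Subsingleton ↥(L.homology (j+1))) := by
    intro j
    have h1 : L.ExactAt (j+1) ↔ (L.sc' (j+2) (j+1) j).Exact :=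
      L.exactAt_iff' (j+2) (j+1) j (hprev j) (hnext j)
    have h2 : (L.sc' (j+2) (j+1) j).Exact ↔
        (LinearMap.range (L.sc' (j+2) (j+1) j).f.hom = LinearMap.ker (L.sc' (j+2) (j+1) j).g.hom) :=
      CategoryTheory.ShortComplex.moduleCat_exact_iff_range_eq_ker _
    have h3 : L.ExactAt (j+1) ↔ Limits.IsZero (L.homology (j+1)) :=
      L.exactAt_iff_isZero_homology (j+1)
    have hf' : (L.sc' (j+2) (j+1) j).f = L.d (j+2) (j+1) := rfl
    have hg' : (L.sc' (j+2) (j+1) j).g = L.d (j+1) j := rfl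
    rw [hf', hg'] at h2
    constructor
    · intro hE
      exact PS.subsingleton_of_isZero (h3.mp (h1.mpr (h2.mpr hE)))
    · intro hs
      exact h2.mp (h1.mp (h3.mpr (ModuleCat.isZero_of_subsingleton _)))
  -- main downward induction
  have key : ∀ (n : ℕ), ∀ j, s = (j+1) + n →
      LinearMap.range (L.d (j+2) (j+1)).hom = LinearMap.ker (L.d (j+1) j).hom := by
    intro n
    induction n using Nat.strong_induction_on with
    | _ n IH =>
      intro j hs
      -- depth of boundary modules, downward from the top
      have D : ∀ q i, i + q = s → j + 1 ≤ i →
          PS.DepthGE (R := R) ↥(LinearMap.range (L.d (i+1) i).hom) (i+1) := by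
        intro q
        induction q with
        | zero =>
          intro i hi _
          haveI : Subsingleton ↥(L.X (i+1)) :=
            PS.subsingleton_of_isZero (hb (i+1) (by omega))
          haveI : Subsingleton ↥(LinearMap.range (L.d (i+1) i).hom) := by
            constructor
            rintro ⟨_, x, rfl⟩ ⟨_, y, rfl⟩
            exact Subtype.ext (congrArg (fun z => L.d (i+1) i z) (Subsingleton.elim x y))
          exact PS.DepthGE.of_subsingleton _
        | succ q IHq =>
          intro i hi hij
          have hex : LinearMap.range (L.d (i+2) (i+1)).hom = LinearMap.ker (L.d (i+1) i).hom :=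
            IH q (by omega) i (by omega)
          have hD1 : PS.DepthGE (R := R) ↥(LinearMap.range (L.d (i+2) (i+1)).hom) (i+2) :=
            IHq (i+1) (by omega) (by omega)
          rw [hex] at hD1
          haveI : Module.Finite R ↥(LinearMap.ker (L.d (i+1) i).hom) :=
            Module.Finite.iff_fg.mpr (IsNoetherian.noetherian _)
          haveI : Module.Finite R ↥(LinearMap.range (L.d (i+1) i).hom) :=
            Module.Finite.iff_fg.mpr (IsNoetherian.noetherian _)
          have hB : PS.DepthGE (R := R) ↥(L.X (i+1)) (i+1) := hdepth (i+1) (by omega) (by omega)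
          have hexact : Function.Exact ((LinearMap.ker (L.d (i+1) i).hom).subtype)
              ((L.d (i+1) i).hom.rangeRestrict) := by
            intro b
            constructor
            · intro h0
              have hb0 : L.d (i+1) i b = 0 := by
                have := congrArg Subtype.val h0
                exact this
              exact ⟨⟨b, hb0⟩, rfl⟩
            · rintro ⟨⟨b', hb'⟩, rfl⟩
              exact Subtype.ext hb'
          exact PS.depth_lemma (i+1) ↥(LinearMap.ker (L.d (i+1) i).hom) ↥(L.X (i+1))
            ↥(LinearMap.range (L.d (i+1) i).hom)
            ((LinearMap.ker (L.d (i+1) i).hom).subtype)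
            ((L.d (i+1) i).hom.rangeRestrict)
            (Submodule.injective_subtype _) (LinearMap.surjective_rangeRestrict _)
            hexact hD1 hB
      -- now the statement at level j+1
      rcases hdepth0 (j+1) (by omega) (by omega) with hss | hsoc
      · exact (hEP j).mpr hss
      · exfalso
        have hBZ : LinearMap.range (L.d (j+2) (j+1)).hom ≤ LinearMap.ker (L.d (j+1) j).hom := by
          rintro y ⟨x, rfl⟩
          rw [LinearMap.mem_ker]
          have hdd := L.d_comp_d (j+2) (j+1) j
          calc L.d (j+1) j (L.d (j+2) (j+1) x) = (L.d (j+2) (j+1) ≫ L.d (j+1) j) x := rfl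
            _ = 0 := by rw [hdd]; rfl
        have hDB : PS.DepthGE (R := R) ↥(LinearMap.range (L.d (j+2) (j+1)).hom) (j+2) :=
          D (s - (j+1)) (j+1) (by omega) le_rfl
        haveI : Module.Finite R ↥(LinearMap.range (L.d (j+2) (j+1)).hom) :=
          Module.Finite.iff_fg.mpr (IsNoetherian.noetherian _)
        haveI : Module.Finite R ↥(LinearMap.ker (L.d (j+1) j).hom) :=
          Module.Finite.iff_fg.mpr (IsNoetherian.noetherian _)
        set S' := L.sc' (j+2) (j+1) j with hS'
        have hNN : LinearMap.range S'.moduleCatToCycles =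
            Submodule.comap (LinearMap.ker (L.d (j+1) j).hom).subtype
              (LinearMap.range (L.d (j+2) (j+1)).hom) := by
          ext z
          constructor
          · rintro ⟨x, rfl⟩
            exact ⟨x, rfl⟩
          · rintro ⟨x, hx⟩
            exact ⟨x, Subtype.ext hx⟩
        have hexact : Function.Exact (Submodule.inclusion hBZ) (LinearMap.range S'.moduleCatToCycles).mkQ := by
          intro z
          constructor
          · intro h0
            have hz : z ∈ LinearMap.range S'.moduleCatToCycles := by
              exact (Submodule.Quotient.mk_eq_zero (LinearMap.range S'.moduleCatToCycles)).mp h0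
            rw [hNN] at hz
            exact ⟨⟨_, Submodule.mem_comap.mp hz⟩, Subtype.ext rfl⟩
          · rintro ⟨w, rfl⟩
            have : (Submodule.inclusion hBZ w) ∈ LinearMap.range S'.moduleCatToCycles := by
              rw [hNN]
              exact w.2
            exact (Submodule.Quotient.mk_eq_zero _).mpr this
        have hDZ : PS.DepthGE (R := R) ↥(LinearMap.ker (L.d (j+1) j).hom) 1 := by
          obtain ⟨rs, hlen, hmem, hreg⟩ := hdepth (j+1) (by omega) (by omega)
          match rs, hlen, hmem, hreg with
          | r0 :: rest, hlen, hmem, hreg =>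
            have hr0 : IsSMulRegular ↥(L.X (j+1)) r0 :=
              ((RingTheory.Sequence.isWeaklyRegular_cons_iff _ r0 rest).mp hreg).1
            refine ⟨[r0], rfl, ?_, (RingTheory.Sequence.isWeaklyRegular_singleton_iff _ r0).mpr
                (PS.isSMulRegular_submodule _ hr0)⟩
            intro t ht
            have htr : t = r0 := List.mem_singleton.mp ht
            rw [htr]
            exact hmem r0 (by simp)
        haveI : IsNoetherian R ↥(S'.X₂) :=
          (isNoetherian_of_isNoetherianRing_of_finite R ↥(L.X (j+1)) :)
        haveI : Module.Finite R ↥(LinearMap.ker S'.g.hom) :=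
          Module.Finite.iff_fg.mpr (IsNoetherian.noetherian _)
        have hnos : ¬ PS.HasSocle (R := R) (↥(LinearMap.ker S'.g.hom) ⧸ LinearMap.range S'.moduleCatToCycles) :=
          PS.no_socle (A := ↥(LinearMap.range (L.d (j+2) (j+1)).hom)) (B := ↥(LinearMap.ker (L.d (j+1) j).hom)) (Submodule.inclusion hBZ) (LinearMap.range S'.moduleCatToCycles).mkQ
            (Submodule.inclusion_injective _) (Submodule.mkQ_surjective (LinearMap.range S'.moduleCatToCycles))
            hexact (hDB.mono (by omega)) hDZ
        haveI : Module.Finite R (↥(LinearMap.ker S'.g.hom) ⧸ LinearMap.range S'.moduleCatToCycles) := Module.Finite.quotient R _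
        obtain ⟨r, hrm, hr⟩ :=
          PS.exists_smulRegular_of_not_hasSocle (↥(LinearMap.ker S'.g.hom) ⧸ LinearMap.range S'.moduleCatToCycles) hnos
        obtain ⟨x, hx0, hrx⟩ := hsoc r hrm
        have e : (L.homology (j+1)) ≅ S'.moduleCatLeftHomologyData.H :=
          (L.homologyIsoSc' (j+2) (j+1) j (hprev j) (hnext j)) ≪≫ S'.moduleCatHomologyIso
        have hinv : e.inv (e.hom x) = x := by
          have hid := e.hom_inv_id
          calc e.inv (e.hom x) = (e.hom ≫ e.inv) x := rfl
            _ = (𝟙 (L.homology (j+1))) x := by rw [hid]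
            _ = x := rfl
        have hex0 : e.hom x ≠ 0 := by
          intro h0
          apply hx0
          rw [← hinv, h0, map_zero]
        apply hex0
        apply hr
        show r • e.hom x = r • 0
        rw [smul_zero, ← map_smul, hrx, map_zero]
  intro i hi his
  obtain ⟨j, rfl⟩ : ∃ j, i = j + 1 := ⟨i - 1, by omega⟩
  exact (hEP j).mp (key (s - (j+1)) j (by omega))
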